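/- Let U ⊆ ℝ³ be open, let n : U → ℝ³ be continuously differentiable with |n(x)| = 1 for all x ∈ U, and set Q(x) = n(x)⊗n(x) − (1/3)I. Then for any L₁, L₂, L₃ ∈ ℝ the following pointwise identity holds on U: (L₁/2) Σ_{i,j,k} (∂_k Q_{ij})² + (L₂/2) Σ_{i,j,k} ∂_j Q_{ik} ∂_k Q_{ij} + (L₃/2) Σ_{i,j,k} ∂_j Q_{ij} ∂_k Q_{ik} = K₁ (div n)² + K₂ (n · curl n)² + K₃ |n × curl n|² + (K₂ + K₄)[ Σ_{i,j} ∂_j n_i ∂_i n_j − (div n)² ], where K₁ = K₃ = L₁ + (1/2)(L₂ + L₃), K₂ = L₁, and K₂ + K₄ = L₁ + (1/2)L₂. -/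

import Mathlib

open Real Matrix

noncomputable section

/-- Partial derivative in direction `k` of a scalar function on `ℝ³`. -/
def pd3 (k : Fin 3) (f : (Fin 3 → ℝ) → ℝ) (x : Fin 3 → ℝ) : ℝ :=
  fderiv ℝ f x (Pi.single k 1)

/-- The uniaxial `Q`-tensor field `Q = n⊗n − (1/3)I` built from a director field `n`. -/
def Qn (n : (Fin 3 → ℝ) → (Fin 3 → ℝ)) (x : Fin 3 → ℝ) : Matrix (Fin 3) (Fin 3) ℝ :=
  vecMulVec (n x) (n x) - (1/3 : ℝ) • (1 : Matrix (Fin 3) (Fin 3) ℝ)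

/-- Divergence of a vector field on `ℝ³`. -/
def divv (n : (Fin 3 → ℝ) → (Fin 3 → ℝ)) (x : Fin 3 → ℝ) : ℝ :=
  ∑ i : Fin 3, pd3 i (fun z => n z i) x

/-- Curl of a vector field on `ℝ³`. -/
def curlv (n : (Fin 3 → ℝ) → (Fin 3 → ℝ)) (x : Fin 3 → ℝ) : Fin 3 → ℝ :=
  ![pd3 1 (fun z => n z 2) x - pd3 2 (fun z => n z 1) x,
    pd3 2 (fun z => n z 0) x - pd3 0 (fun z => n z 2) x,
    pd3 0 (fun z => n z 1) x - pd3 1 (fun z => n z 0) x]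

/-- Cross product of vectors in `ℝ³`. -/
def crossv (u v : Fin 3 → ℝ) : Fin 3 → ℝ :=
  ![u 1 * v 2 - u 2 * v 1, u 2 * v 0 - u 0 * v 2, u 0 * v 1 - u 1 * v 0]

end

/-- On uniaxial `Q`-tensors `Q = n⊗n − (1/3)I` built from a unit
director field, the Landau–de Gennes elastic energy density equals the Oseen–Frank
energy density with `K₁ = K₃ = L₁ + (L₂+L₃)/2`, `K₂ = L₁`, `K₂ + K₄ = L₁ + L₂/2`. -/
theorem landau_de_gennes_to_oseen_frank
    (U : Set (Fin 3 → ℝ)) (hU : IsOpen U)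
    (n : (Fin 3 → ℝ) → (Fin 3 → ℝ))
    (hn : ∀ i : Fin 3, ContDiffOn ℝ 1 (fun x => n x i) U)
    (hunit : ∀ x ∈ U, ∑ i : Fin 3, (n x i)^2 = 1)
    (L1 L2 L3 : ℝ) :
    ∀ x ∈ U,
      (L1/2) * (∑ i : Fin 3, ∑ j : Fin 3, ∑ k : Fin 3, (pd3 k (fun z => Qn n z i j) x)^2)
      + (L2/2) * (∑ i : Fin 3, ∑ j : Fin 3, ∑ k : Fin 3,
          pd3 j (fun z => Qn n z i k) x * pd3 k (fun z => Qn n z i j) x)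
      + (L3/2) * (∑ i : Fin 3, ∑ j : Fin 3, ∑ k : Fin 3,
          pd3 j (fun z => Qn n z i j) x * pd3 k (fun z => Qn n z i k) x)
      = (L1 + (1/2) * (L2 + L3)) * (divv n x)^2
        + L1 * (∑ i : Fin 3, n x i * curlv n x i)^2
        + (L1 + (1/2) * (L2 + L3)) * (∑ i : Fin 3, (crossv (n x) (curlv n x) i)^2)
        + (L1 + (1/2) * L2) *
            ((∑ i : Fin 3, ∑ j : Fin 3,
                pd3 j (fun z => n z i) x * pd3 i (fun z => n z j) x)
              - (divv n x)^2) := by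
  intro x hx
  have hmem : U ∈ nhds x := hU.mem_nhds hx
  have hdiff : ∀ i : Fin 3, DifferentiableAt ℝ (fun z => n z i) x := fun i =>
    ((hn i).contDiffAt hmem).differentiableAt one_ne_zero
  have hQ : ∀ i j k : Fin 3, pd3 k (fun z => Qn n z i j) x
      = pd3 k (fun z => n z i) x * n x j + n x i * pd3 k (fun z => n z j) x := by
    intro i j k
    have h1 : (fun z => Qn n z i j)
        = fun z => n z i * n z j - (1/3 : ℝ) * (1 : Matrix (Fin 3) (Fin 3) ℝ) i j := by
      funext z
      simp [Qn, Matrix.sub_apply, Matrix.smul_apply, Matrix.vecMulVec_apply, smul_eq_mul]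
    simp only [pd3, h1]
    rw [fderiv_sub_const, fderiv_fun_mul (hdiff i) (hdiff j)]
    simp only [ContinuousLinearMap.add_apply, ContinuousLinearMap.smul_apply, smul_eq_mul]
    ring
  have hF : ∀ k : Fin 3,
      fderiv ℝ (fun z => n z 0 * n z 0 + n z 1 * n z 1 + n z 2 * n z 2) x (Pi.single k 1) = 0 := by
    have heq : (fun z => n z 0 * n z 0 + n z 1 * n z 1 + n z 2 * n z 2)
        =ᶠ[nhds x] fun _ => (1:ℝ) := by
      filter_upwards [hmem] with z hz
      have h := hunit z hz
      simp only [Fin.sum_univ_three, pow_two] at h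
      exact h
    intro k
    rw [heq.fderiv_eq, fderiv_const_apply]
    simp
  have hsq : ∀ k : Fin 3,
      n x 0 * pd3 k (fun z => n z 0) x + n x 1 * pd3 k (fun z => n z 1) x
        + n x 2 * pd3 k (fun z => n z 2) x = 0 := by
    intro k
    have h1 := hF k
    rw [fderiv_fun_add (f := fun z => n z 0 * n z 0 + n z 1 * n z 1) (g := fun z => n z 2 * n z 2)
        (((hdiff 0).mul (hdiff 0)).add ((hdiff 1).mul (hdiff 1)))
        ((hdiff 2).mul (hdiff 2)),
      fderiv_fun_add (f := fun z => n z 0 * n z 0) (g := fun z => n z 1 * n z 1)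
        ((hdiff 0).mul (hdiff 0)) ((hdiff 1).mul (hdiff 1)),
      fderiv_fun_mul (hdiff 0) (hdiff 0), fderiv_fun_mul (hdiff 1) (hdiff 1),
      fderiv_fun_mul (hdiff 2) (hdiff 2)] at h1
    simp only [ContinuousLinearMap.add_apply, ContinuousLinearMap.smul_apply, smul_eq_mul] at h1
    simp only [pd3]
    linarith
  have hA : n x 0 ^ 2 + n x 1 ^ 2 + n x 2 ^ 2 = 1 := by
    have h := hunit x hx
    simpa [Fin.sum_univ_three] using h
  have hs0 := hsq 0
  have hs1 := hsq 1
  have hs2 := hsq 2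
  simp only [divv, curlv, crossv, Fin.sum_univ_three, Matrix.cons_val_zero, Matrix.cons_val_one,
    Matrix.head_cons, Matrix.cons_val_two, Matrix.tail_cons, hQ]
  linear_combination
        (L1 * ((1 : ℝ) * (pd3 2 (fun z => n z 2) x) * (pd3 2 (fun z => n z 2) x) + (2 : ℝ) * (pd3 2 (fun z => n z 1) x) * (pd3 1 (fun z => n z 2) x) + (1 : ℝ) * (pd3 1 (fun z => n z 1) x) * (pd3 1 (fun z => n z 1) x) + (2 : ℝ) * (pd3 2 (fun z => n z 0) x) * (pd3 0 (fun z => n z 2) x) + (2 : ℝ) * (pd3 1 (fun z => n z 0) x) * (pd3 0 (fun z => n z 1) x) + (1 : ℝ) * (pd3 0 (fun z => n z 0) x) * (pd3 0 (fun z => n z 0) x))) * hA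
        + (L2 * ((1/2 : ℝ) * (pd3 2 (fun z => n z 2) x) * (pd3 2 (fun z => n z 2) x) + (1 : ℝ) * (pd3 2 (fun z => n z 1) x) * (pd3 1 (fun z => n z 2) x) + (1/2 : ℝ) * (pd3 1 (fun z => n z 1) x) * (pd3 1 (fun z => n z 1) x) + (1 : ℝ) * (pd3 2 (fun z => n z 0) x) * (pd3 0 (fun z => n z 2) x) + (1 : ℝ) * (pd3 1 (fun z => n z 0) x) * (pd3 0 (fun z => n z 1) x) + (1/2 : ℝ) * (pd3 0 (fun z => n z 0) x) * (pd3 0 (fun z => n z 0) x))) * hA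
        + (L3 * ((1/2 : ℝ) * (pd3 2 (fun z => n z 2) x) * (pd3 2 (fun z => n z 2) x) + (1 : ℝ) * (pd3 1 (fun z => n z 1) x) * (pd3 2 (fun z => n z 2) x) + (1/2 : ℝ) * (pd3 1 (fun z => n z 1) x) * (pd3 1 (fun z => n z 1) x) + (1 : ℝ) * (pd3 0 (fun z => n z 0) x) * (pd3 2 (fun z => n z 2) x) + (1 : ℝ) * (pd3 0 (fun z => n z 0) x) * (pd3 1 (fun z => n z 1) x) + (1/2 : ℝ) * (pd3 0 (fun z => n z 0) x) * (pd3 0 (fun z => n z 0) x))) * hA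
        + (L1 * ((1 : ℝ) * (n x 2) * (pd3 0 (fun z => n z 2) x) + (1 : ℝ) * (n x 1) * (pd3 0 (fun z => n z 1) x) + (1 : ℝ) * (n x 0) * (pd3 0 (fun z => n z 0) x))) * hs0
        + (L2 * ((-1/2 : ℝ) * (n x 2) * (pd3 0 (fun z => n z 2) x) + (2 : ℝ) * (n x 2) * (pd3 2 (fun z => n z 0) x) + (-1/2 : ℝ) * (n x 1) * (pd3 0 (fun z => n z 1) x) + (2 : ℝ) * (n x 1) * (pd3 1 (fun z => n z 0) x) + (3/2 : ℝ) * (n x 0) * (pd3 0 (fun z => n z 0) x))) * hs0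
        + (L3 * ((-1/2 : ℝ) * (n x 2) * (pd3 0 (fun z => n z 2) x) + (1 : ℝ) * (n x 2) * (pd3 2 (fun z => n z 0) x) + (-1/2 : ℝ) * (n x 1) * (pd3 0 (fun z => n z 1) x) + (1 : ℝ) * (n x 1) * (pd3 1 (fun z => n z 0) x) + (1 : ℝ) * (n x 0) * (pd3 2 (fun z => n z 2) x) + (1 : ℝ) * (n x 0) * (pd3 1 (fun z => n z 1) x) + (3/2 : ℝ) * (n x 0) * (pd3 0 (fun z => n z 0) x))) * hs0
        + (L1 * ((1 : ℝ) * (n x 2) * (pd3 1 (fun z => n z 2) x) + (1 : ℝ) * (n x 1) * (pd3 1 (fun z => n z 1) x) + (1 : ℝ) * (n x 0) * (pd3 1 (fun z => n z 0) x))) * hs1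
        + (L2 * ((-1/2 : ℝ) * (n x 2) * (pd3 1 (fun z => n z 2) x) + (2 : ℝ) * (n x 2) * (pd3 2 (fun z => n z 1) x) + (3/2 : ℝ) * (n x 1) * (pd3 1 (fun z => n z 1) x) + (2 : ℝ) * (n x 0) * (pd3 0 (fun z => n z 1) x) + (-1/2 : ℝ) * (n x 0) * (pd3 1 (fun z => n z 0) x))) * hs1
        + (L3 * ((-1/2 : ℝ) * (n x 2) * (pd3 1 (fun z => n z 2) x) + (1 : ℝ) * (n x 2) * (pd3 2 (fun z => n z 1) x) + (1 : ℝ) * (n x 1) * (pd3 2 (fun z => n z 2) x) + (3/2 : ℝ) * (n x 1) * (pd3 1 (fun z => n z 1) x) + (1 : ℝ) * (n x 1) * (pd3 0 (fun z => n z 0) x) + (1 : ℝ) * (n x 0) * (pd3 0 (fun z => n z 1) x) + (-1/2 : ℝ) * (n x 0) * (pd3 1 (fun z => n z 0) x))) * hs1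
        + (L1 * ((1 : ℝ) * (n x 2) * (pd3 2 (fun z => n z 2) x) + (1 : ℝ) * (n x 1) * (pd3 2 (fun z => n z 1) x) + (1 : ℝ) * (n x 0) * (pd3 2 (fun z => n z 0) x))) * hs2
        + (L2 * ((3/2 : ℝ) * (n x 2) * (pd3 2 (fun z => n z 2) x) + (2 : ℝ) * (n x 1) * (pd3 1 (fun z => n z 2) x) + (-1/2 : ℝ) * (n x 1) * (pd3 2 (fun z => n z 1) x) + (2 : ℝ) * (n x 0) * (pd3 0 (fun z => n z 2) x) + (-1/2 : ℝ) * (n x 0) * (pd3 2 (fun z => n z 0) x))) * hs2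
        + (L3 * ((3/2 : ℝ) * (n x 2) * (pd3 2 (fun z => n z 2) x) + (1 : ℝ) * (n x 2) * (pd3 1 (fun z => n z 1) x) + (1 : ℝ) * (n x 2) * (pd3 0 (fun z => n z 0) x) + (1 : ℝ) * (n x 1) * (pd3 1 (fun z => n z 2) x) + (-1/2 : ℝ) * (n x 1) * (pd3 2 (fun z => n z 1) x) + (1 : ℝ) * (n x 0) * (pd3 0 (fun z => n z 2) x) + (-1/2 : ℝ) * (n x 0) * (pd3 2 (fun z => n z 0) x))) * hs2
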